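/- arXiv:1609.00168 — 3 statements merged into one kernel-verified Lean document; each statement's English description precedes it below -/
import Mathlib

section
/- Let d ≥ 2 and 1 ≤ k ≤ d-1 be integers, and let 0 = ℓ₀ < ℓ₁ < ⋯ < ℓ_k ≤ d be integers with ℓ_{k+1} := d+1. Then for every r with 1 ≤ r ≤ k, Σ_{t=r}^{k} ( (d+1)(d - ℓ_t + t)/(d(k+1)) - ℓ_{t+1} + ℓ_t ) < 0. -/
theorem stmt_1 (d k r : ℕ) (hd : 2 ≤ d) (hk1 : 1 ≤ k) (hk2 : k ≤ d - 1)
    (hr1 : 1 ≤ r) (hrk : r ≤ k)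
    (ℓ : ℕ → ℤ) (h0 : ℓ 0 = 0)
    (hmono : ∀ i j : ℕ, i < j → j ≤ k → ℓ i < ℓ j)
    (hled : ℓ k ≤ (d : ℤ)) (htop : ℓ (k + 1) = (d : ℤ) + 1) :
    ∑ t ∈ Finset.Icc r k,
        (((d : ℚ) + 1) * ((d : ℚ) - (ℓ t : ℚ) + (t : ℚ)) / ((d : ℚ) * ((k : ℚ) + 1))
          - (ℓ (t + 1) : ℚ) + (ℓ t : ℚ)) < 0 := by
  have hkd : k < d := by omega
  -- gap lemma: strictly increasing integer sequence grows at least by 1 per step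
  have gap : ∀ i j : ℕ, i ≤ j → j ≤ k → (j : ℤ) - (i : ℤ) ≤ ℓ j - ℓ i := by
    intro i j hij hjk
    induction j, hij using Nat.le_induction with
    | base => simp
    | succ n hn ih =>
      have h1 := ih (by omega)
      have h2 := hmono n (n + 1) (by omega) hjk
      push_cast
      omega
  -- telescope
  have tele : ∀ n : ℕ, r ≤ n → ∑ t ∈ Finset.Icc r n, ((ℓ (t + 1) : ℚ) - (ℓ t : ℚ))
      = (ℓ (n + 1) : ℚ) - (ℓ r : ℚ) := by
    intro n hn
    induction n, hn using Nat.le_induction with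
    | base => simp
    | succ n hn ih =>
      rw [Finset.sum_Icc_succ_top (by omega), ih]
      ring
  set c : ℚ := ((d : ℚ) + 1) / ((d : ℚ) * ((k : ℚ) + 1)) with hc
  have hsum : ∑ t ∈ Finset.Icc r k,
        (((d : ℚ) + 1) * ((d : ℚ) - (ℓ t : ℚ) + (t : ℚ)) / ((d : ℚ) * ((k : ℚ) + 1))
          - (ℓ (t + 1) : ℚ) + (ℓ t : ℚ))
      = c * (∑ t ∈ Finset.Icc r k, ((d : ℚ) - (ℓ t : ℚ) + (t : ℚ)))
        - ((ℓ (k + 1) : ℚ) - (ℓ r : ℚ)) := by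
    rw [Finset.mul_sum, ← tele k hrk, ← Finset.sum_sub_distrib]
    apply Finset.sum_congr rfl
    intro t ht
    rw [hc]
    ring
  rw [hsum]
  -- bound the sum
  have hterm : ∀ t ∈ Finset.Icc r k, ((d : ℚ) - (ℓ t : ℚ) + (t : ℚ))
      ≤ ((d : ℚ) - (ℓ r : ℚ) + (r : ℚ)) := by
    intro t ht
    simp only [Finset.mem_Icc] at ht
    have h1 := gap r t ht.1 ht.2
    have h2 : (t : ℚ) - (r : ℚ) ≤ (ℓ t : ℚ) - (ℓ r : ℚ) := by exact_mod_cast h1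
    linarith
  have hb : ∑ t ∈ Finset.Icc r k, ((d : ℚ) - (ℓ t : ℚ) + (t : ℚ))
      ≤ ((k : ℚ) - (r : ℚ) + 1) * ((d : ℚ) - (ℓ r : ℚ) + (r : ℚ)) := by
    calc ∑ t ∈ Finset.Icc r k, ((d : ℚ) - (ℓ t : ℚ) + (t : ℚ))
        ≤ (Finset.Icc r k).card • ((d : ℚ) - (ℓ r : ℚ) + (r : ℚ)) :=
          Finset.sum_le_card_nsmul _ _ _ hterm
      _ = ((k : ℚ) - (r : ℚ) + 1) * ((d : ℚ) - (ℓ r : ℚ) + (r : ℚ)) := by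
          rw [Nat.card_Icc, nsmul_eq_mul]
          congr 1
          push_cast [Nat.cast_sub (by omega : r ≤ k + 1)]
          ring
  have hcpos : 0 < (d : ℚ) * ((k : ℚ) + 1) := by positivity
  have hcnn : 0 ≤ c := by rw [hc]; positivity
  have hstep : c * (∑ t ∈ Finset.Icc r k, ((d : ℚ) - (ℓ t : ℚ) + (t : ℚ)))
      ≤ c * (((k : ℚ) - (r : ℚ) + 1) * ((d : ℚ) - (ℓ r : ℚ) + (r : ℚ))) :=
    mul_le_mul_of_nonneg_left hb hcnn
  -- the key integer inequality
  have h1 : (r : ℤ) ≤ ℓ r := by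
    have := gap 0 r (Nat.zero_le r) hrk
    omega
  have h2 : ℓ r ≤ (d : ℤ) - (k : ℤ) + (r : ℤ) := by
    have := gap r k hrk le_rfl
    omega
  have key : ((d : ℤ) + 1) * (((k : ℤ) - (r : ℤ) + 1) * ((d : ℤ) - ℓ r + (r : ℤ)))
      < ((d : ℤ) * ((k : ℤ) + 1)) * ((d : ℤ) + 1 - ℓ r) := by
    have hr' : (1 : ℤ) ≤ (r : ℤ) := by exact_mod_cast hr1
    have hrk' : (r : ℤ) ≤ (k : ℤ) := by exact_mod_cast hrk
    have hkd' : (k : ℤ) < (d : ℤ) := by exact_mod_cast hkd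
    have hdr : (0:ℤ) < (d:ℤ) * (r:ℤ) := mul_pos (by linarith) (by linarith)
    nlinarith [mul_nonneg (sub_nonneg.2 h1) (by linarith : (0:ℤ) ≤ (k:ℤ) - r + 1),
      mul_nonneg (by linarith [h2] : (0:ℤ) ≤ (d:ℤ) - k + r - ℓ r) (le_of_lt hdr),
      mul_pos hdr (by linarith : (0:ℤ) < (d:ℤ) - k)]
  have keyQ : ((d : ℚ) + 1) * (((k : ℚ) - (r : ℚ) + 1) * ((d : ℚ) - (ℓ r : ℚ) + (r : ℚ)))
      < ((d : ℚ) * ((k : ℚ) + 1)) * ((d : ℚ) + 1 - (ℓ r : ℚ)) := by exact_mod_cast key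
  have hfin : c * (((k : ℚ) - (r : ℚ) + 1) * ((d : ℚ) - (ℓ r : ℚ) + (r : ℚ)))
      < (d : ℚ) + 1 - (ℓ r : ℚ) := by
    rw [hc, div_mul_eq_mul_div, div_lt_iff₀ hcpos]
    linarith [keyQ]
  have htopQ : (ℓ (k + 1) : ℚ) = (d : ℚ) + 1 := by exact_mod_cast htop
  rw [htopQ]
  linarith
end

section
/- Let d ≥ 2 and 1 ≤ k ≤ d-1 be integers, and let 0 = ℓ₀ < ℓ₁ < ⋯ < ℓ_k ≤ d be integers. Then for every r with 1 ≤ r ≤ k, the inequality (dk - 1)(ℓ_r - r) < dr(d-k) + (d+1) Σ_{t=r+1}^{k} (ℓ_t - t) holds. -/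
theorem stmt_2 (d k r : ℕ) (hd : 2 ≤ d) (hk1 : 1 ≤ k) (hk2 : k ≤ d - 1)
    (hr1 : 1 ≤ r) (hrk : r ≤ k)
    (ℓ : ℕ → ℤ) (h0 : ℓ 0 = 0)
    (hmono : ∀ i j : ℕ, i < j → j ≤ k → ℓ i < ℓ j)
    (hled : ℓ k ≤ (d : ℤ)) :
    ((d : ℤ) * (k : ℤ) - 1) * (ℓ r - (r : ℤ))
      < (d : ℤ) * (r : ℤ) * ((d : ℤ) - (k : ℤ))
        + ((d : ℤ) + 1) * ∑ t ∈ Finset.Icc (r + 1) k, (ℓ t - (t : ℤ)) := by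
  -- ℓ t ≥ t for all t ≤ k
  have hlow : ∀ t, t ≤ k → (t : ℤ) ≤ ℓ t := by
    intro t
    induction t with
    | zero => intro _; simp [h0]
    | succ n ih =>
      intro h
      have h1 := hmono n (n + 1) (by omega) h
      have h2 := ih (by omega)
      push_cast
      omega
  -- m_t nondecreasing for r ≤ t ≤ k
  have hmr : ∀ t, r ≤ t → t ≤ k → ℓ r - (r : ℤ) ≤ ℓ t - (t : ℤ) := by
    intro t ht
    induction t, ht using Nat.le_induction with
    | base => intro _; exact le_rfl
    | succ n hn ih =>
      intro h
      have h1 := hmono n (n + 1) (by omega) h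
      have h2 := ih (by omega)
      push_cast
      omega
  have hm0 : (0 : ℤ) ≤ ℓ r - (r : ℤ) := by
    have := hlow r hrk; omega
  have hmk : ℓ r - (r : ℤ) ≤ (d : ℤ) - (k : ℤ) := by
    have := hmr k hrk le_rfl; omega
  have hsum : ((k : ℤ) - (r : ℤ)) * (ℓ r - (r : ℤ))
      ≤ ∑ t ∈ Finset.Icc (r + 1) k, (ℓ t - (t : ℤ)) := by
    have h1 : ∑ t ∈ Finset.Icc (r + 1) k, (ℓ r - (r : ℤ))
        ≤ ∑ t ∈ Finset.Icc (r + 1) k, (ℓ t - (t : ℤ)) := by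
      apply Finset.sum_le_sum
      intro t ht
      simp only [Finset.mem_Icc] at ht
      exact hmr t (by omega) ht.2
    have h2 : ∑ t ∈ Finset.Icc (r + 1) k, (ℓ r - (r : ℤ))
        = ((k : ℤ) - (r : ℤ)) * (ℓ r - (r : ℤ)) := by
      rw [Finset.sum_const, Nat.card_Icc]
      have : k + 1 - (r + 1) = k - r := by omega
      rw [this, nsmul_eq_mul, Nat.cast_sub hrk]
    linarith
  have hkd : (k : ℤ) + 1 ≤ (d : ℤ) := by exact_mod_cast by omega
  have hrk' : (r : ℤ) ≤ (k : ℤ) := by exact_mod_cast hrk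
  have hr1' : (1 : ℤ) ≤ (r : ℤ) := by exact_mod_cast hr1
  have hd' : (2 : ℤ) ≤ (d : ℤ) := by exact_mod_cast hd
  have hrd : (1:ℤ) ≤ (r:ℤ) * (d:ℤ) := by nlinarith
  nlinarith [mul_nonneg (by linarith : (0:ℤ) ≤ (r:ℤ) * (d:ℤ) - 1)
      (by linarith : (0:ℤ) ≤ (d : ℤ) - (k : ℤ) - (ℓ r - (r:ℤ))),
    mul_nonneg (by linarith : (0:ℤ) ≤ (k:ℤ) - (r:ℤ)) hm0,
    mul_nonneg (by linarith : (0:ℤ) ≤ (d:ℤ) + 1) (by linarith [hsum] : (0:ℤ) ≤ (∑ t ∈ Finset.Icc (r + 1) k, (ℓ t - (t : ℤ))) - ((k : ℤ) - (r : ℤ)) * (ℓ r - (r : ℤ)))]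
end

section
/- For integers d ≥ 2, 1 ≤ s ≤ k ≤ d-1 and any nonnegative reals e₀, …, e_d and any admissible sequence 0 = ℓ₀ < ℓ₁ < ⋯ < ℓ_s ≤ d, define U(s, ℓ) by replacing, in the product ∏_{j=0}^{s} ( e_{ℓ_j} ∏_{t=ℓ_j+1}^{ℓ_{j+1}-1} min(e_t, q^j) ), the factor min(e_t, q^j) by q^j for the d-k largest such indices t and by e_t for the remaining k-s indices t (where ℓ_{s+1}=d+1). Then there exists a strictly increasing sequence 0 = ℓ₀ < ℓ₁' < ⋯ < ℓ_{s+1}' ≤ d, obtained by inserting the number ℓ_{j₀}+1 where j₀ = min{ j : ℓ_{j+1} ≠ ℓ_j + 1 }, such that U(s, ℓ) · q^{d-k} = U(s+1, ℓ') for every s ≤ k-1. -/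
open Finset in
/-- The majorant `U(s, ℓ)` from the paper: the product `∏_{j=0}^{s} e_{ℓ_j}` times, over all
indices `t ∈ [1,d]` not of the form `ℓ_j` (the "min" indices), the factor `q^{j(t)}` (where
`j(t) = max{j : ℓ_j < t}`) if `t` is among the `d-k` largest such indices, and `e_t` otherwise. -/
noncomputable def Umaj (q : ℝ) (d k s : ℕ) (ℓ : ℕ → ℕ) (e : ℕ → ℝ) : ℝ :=
  (∏ j ∈ range (s + 1), e (ℓ j)) *
    ∏ t ∈ Icc 1 d \ (Icc 1 s).image ℓ,
      if ((Icc 1 d \ (Icc 1 s).image ℓ).filter (fun t' => t < t')).card < d - k then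
        q ^ ((Icc 1 s).filter (fun j => ℓ j < t)).card
      else e t

open Finset

lemma rank_filter_card (A : Finset ℕ) (n : ℕ) (hn : n ≤ A.card) :
    (A.filter (fun t => (A.filter (fun u => t < u)).card < n)).card = n := by
  set r : ℕ → ℕ := fun t => (A.filter (fun u => t < u)).card with hr
  have key : ∀ a ∈ A, ∀ b ∈ A, a < b → r b < r a := by
    intro a ha b hb hab
    apply Finset.card_lt_card
    constructor
    · intro x hx
      simp only [mem_filter] at hx ⊢
      exact ⟨hx.1, hab.trans hx.2⟩
    · intro hsub
      have : b ∈ A.filter (fun u => b < u) := hsub (by simp [mem_filter, ha, hb, hab])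
      simp at this
  have hinj : Set.InjOn r A := by
    intro a ha b hb hab
    rcases lt_trichotomy a b with h | h | h
    · exact absurd hab (Nat.ne_of_lt (key a ha b hb h)).symm
    · exact h
    · exact absurd hab (Nat.ne_of_lt (key b hb a ha h))
  have hmaps : ∀ a ∈ A, r a < A.card := by
    intro a ha
    apply Finset.card_lt_card
    constructor
    · exact Finset.filter_subset _ _
    · intro hsub
      have : a ∈ A.filter (fun u => a < u) := hsub ha
      simp at this
  have himg : A.image r = Finset.range A.card := by
    apply Finset.eq_of_subset_of_card_le
    · intro x hx
      simp only [mem_image] at hx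
      obtain ⟨a, ha, rfl⟩ := hx
      exact Finset.mem_range.2 (hmaps a ha)
    · rw [Finset.card_range, Finset.card_image_of_injOn hinj]
  calc (A.filter (fun t => r t < n)).card
      = ((A.filter (fun t => r t < n)).image r).card :=
        (Finset.card_image_of_injOn (hinj.mono (fun x hx => Finset.filter_subset _ _ hx))).symm
    _ = ((A.image r).filter (fun x => x < n)).card := by rw [Finset.filter_image]
    _ = n := by
        rw [himg]
        have : (Finset.range A.card).filter (fun x => x < n) = Finset.range n := by
          ext x; simp only [mem_filter, mem_range]; omega
        rw [this, Finset.card_range]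

theorem stmt_18 (d k s : ℕ) (hd : 2 ≤ d) (hk1 : 1 ≤ k) (hk2 : k ≤ d - 1)
    (hs : s ≤ k - 1) (q : ℝ) (hq : 1 < q)
    (ℓ : ℕ → ℕ) (h0 : ℓ 0 = 0)
    (hmono : ∀ i j : ℕ, i < j → j ≤ s → ℓ i < ℓ j)
    (hled : ℓ s ≤ d) (htop : ℓ (s + 1) = d + 1)
    (e : ℕ → ℝ) (he0 : ∀ j, 0 ≤ e j) :
    ∃ ℓ' : ℕ → ℕ,
      ℓ' 0 = 0 ∧
      (∀ i j : ℕ, i < j → j ≤ s + 1 → ℓ' i < ℓ' j) ∧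
      ℓ' (s + 1) ≤ d ∧
      (Finset.Icc 1 (s + 1)).image ℓ'
        = insert (ℓ (sInf {j : ℕ | ℓ (j + 1) ≠ ℓ j + 1}) + 1) ((Finset.Icc 1 s).image ℓ) ∧
      Umaj q d k s ℓ e * q ^ (d - k) = Umaj q d k (s + 1) ℓ' e := by
  -- extend monotonicity to s+1
  have hmono' : ∀ i j : ℕ, i < j → j ≤ s + 1 → ℓ i < ℓ j := by
    intro i j hij hj
    rcases Nat.lt_or_ge j (s + 1) with h | h
    · exact hmono i j hij (by omega)
    · have hj' : j = s + 1 := by omega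
      subst hj'
      have : ℓ i ≤ ℓ s := by
        rcases Nat.lt_or_ge i s with h' | h'
        · exact le_of_lt (hmono i s h' le_rfl)
        · have : i = s := by omega
          subst this; exact le_rfl
      omega
  have hmle : ∀ i j : ℕ, i ≤ j → j ≤ s + 1 → ℓ i ≤ ℓ j := by
    intro i j hij hj
    rcases Nat.lt_or_ge i j with h | h
    · exact le_of_lt (hmono' i j h hj)
    · have : i = j := by omega
      subst this; exact le_rfl
  -- the set T and j₀
  set T : Set ℕ := {j : ℕ | ℓ (j + 1) ≠ ℓ j + 1} with hT
  set j₀ : ℕ := sInf T with hj₀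
  have hTne : ∃ j, j ≤ s ∧ j ∈ T := by
    by_contra hcon
    push_neg at hcon
    have hid : ∀ j, j ≤ s + 1 → ℓ j = j := by
      intro j hj
      induction j with
      | zero => exact h0
      | succ n ih =>
        have hn : ℓ (n + 1) = ℓ n + 1 := by
          by_contra hne
          exact (hcon n (by omega)) hne
        rw [hn, ih (by omega)]
    have := hid (s + 1) le_rfl
    omega
  obtain ⟨j₁, hj₁s, hj₁T⟩ := hTne
  have hj₀T : j₀ ∈ T := Nat.sInf_mem ⟨j₁, hj₁T⟩
  have hj₀s : j₀ ≤ s := le_trans (Nat.sInf_le hj₁T) hj₁s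
  have hid : ∀ j, j ≤ j₀ → ℓ j = j := by
    intro j hj
    induction j with
    | zero => exact h0
    | succ n ih =>
      have hn : n ∉ T := fun h => absurd (Nat.sInf_le h) (by omega)
      have : ℓ (n + 1) = ℓ n + 1 := by simpa [hT] using hn
      rw [this, ih (by omega)]
  have hℓj₀ : ℓ j₀ = j₀ := hid j₀ le_rfl
  set m : ℕ := j₀ + 1 with hm
  have hgap : m < ℓ (j₀ + 1) := by
    have h1 : ℓ j₀ < ℓ (j₀ + 1) := hmono' j₀ (j₀ + 1) (by omega) (by omega)
    have h2 : ℓ (j₀ + 1) ≠ ℓ j₀ + 1 := hj₀T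
    omega
  -- the new sequence
  set ℓ' : ℕ → ℕ := fun i => if i ≤ j₀ + 1 then i else ℓ (i - 1) with hℓ'
  have hℓ'eq1 : ∀ i, i ≤ j₀ + 1 → ℓ' i = i := by intro i hi; simp [hℓ', hi]
  have hℓ'eq2 : ∀ i, j₀ + 1 < i → ℓ' i = ℓ (i - 1) := by
    intro i hi; simp [hℓ', Nat.not_le.mpr hi]
  have hmono'' : ∀ i j : ℕ, i < j → j ≤ s + 1 → ℓ' i < ℓ' j := by
    intro i j hij hj
    rcases le_or_gt j (j₀ + 1) with h | h
    · rw [hℓ'eq1 i (by omega), hℓ'eq1 j h]; exact hij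
    · rw [hℓ'eq2 j h]
      have hjs : j - 1 ≤ s := by omega
      have h1 : ℓ (j₀ + 1) ≤ ℓ (j - 1) := hmle _ _ (by omega) (by omega)
      rcases le_or_gt i (j₀ + 1) with h' | h'
      · rw [hℓ'eq1 i h']; omega
      · rw [hℓ'eq2 i h']
        exact hmono' (i - 1) (j - 1) (by omega) (by omega)
  -- basic sets
  set I : Finset ℕ := (Icc 1 s).image ℓ with hI
  have hmI : m ∉ I := by
    intro hmem
    rw [hI, mem_image] at hmem
    obtain ⟨i, hi, hie⟩ := hmem
    rw [mem_Icc] at hi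
    rcases le_or_gt i j₀ with h | h
    · rw [hid i h] at hie; omega
    · have : ℓ (j₀ + 1) ≤ ℓ i := hmle _ _ h (by omega)
      omega
  have hIsub : I ⊆ Icc 1 d := by
    intro x hx
    rw [hI, mem_image] at hx
    obtain ⟨i, hi, rfl⟩ := hx
    rw [mem_Icc] at hi
    rw [mem_Icc]
    constructor
    · have := hmono' 0 i (by omega) (by omega); omega
    · have := hmle i s hi.2 (by omega); omega
  have hIcard : I.card = s := by
    rw [hI, Finset.card_image_of_injOn, Nat.card_Icc]
    · omega
    · intro a ha b hb hab
      rw [mem_coe, mem_Icc] at ha hb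
      rcases lt_trichotomy a b with h | h | h
      · exact absurd hab (Nat.ne_of_lt (hmono a b h hb.2))
      · exact h
      · exact absurd hab (Nat.ne_of_lt (hmono b a h ha.2)).symm
  set S : Finset ℕ := Icc 1 d \ I with hS
  have hmS : m ∈ S := by
    rw [hS, mem_sdiff, mem_Icc]
    refine ⟨⟨by omega, ?_⟩, hmI⟩
    have : ℓ (j₀ + 1) ≤ ℓ (s + 1) := hmle _ _ (by omega) le_rfl
    omega
  have hScard : S.card = d - s := by
    rw [hS, card_sdiff_of_subset hIsub, hIcard, Nat.card_Icc]; omega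
  have hmin : ∀ t ∈ S, t ≠ m → m < t := by
    intro t ht htm
    rw [hS, mem_sdiff, mem_Icc] at ht
    by_contra hcon
    push_neg at hcon
    have htj : t ≤ j₀ := by omega
    exact ht.2 (by
      rw [hI, mem_image]
      exact ⟨t, mem_Icc.mpr ⟨ht.1.1, by omega⟩, hid t htj⟩)
  set S' : Finset ℕ := S.erase m with hS'
  have hS'card : S'.card = d - s - 1 := by
    rw [hS', card_erase_of_mem hmS, hScard]
  have hmin' : ∀ t ∈ S', m < t := by
    intro t ht
    rw [hS', mem_erase] at ht
    exact hmin t ht.2 ht.1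
  -- image equality
  have himage : (Icc 1 (s + 1)).image ℓ' = insert m I := by
    ext a
    simp only [mem_image, mem_insert, mem_Icc]
    constructor
    · rintro ⟨i, ⟨hi1, hi2⟩, rfl⟩
      rcases le_or_gt i (j₀ + 1) with h | h
      · rw [hℓ'eq1 i h]
        rcases le_or_gt i j₀ with h' | h'
        · right
          rw [hI, mem_image]
          exact ⟨i, mem_Icc.mpr ⟨hi1, by omega⟩, hid i h'⟩
        · left; omega
      · right
        rw [hℓ'eq2 i h, hI, mem_image]
        exact ⟨i - 1, mem_Icc.mpr ⟨by omega, by omega⟩, rfl⟩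
    · rintro (rfl | ha)
      · exact ⟨j₀ + 1, ⟨by omega, by omega⟩, hℓ'eq1 _ le_rfl⟩
      · rw [hI, mem_image] at ha
        obtain ⟨i, hi, rfl⟩ := ha
        rw [mem_Icc] at hi
        rcases le_or_gt i j₀ with h | h
        · exact ⟨i, ⟨hi.1, by omega⟩, by rw [hℓ'eq1 i (by omega), hid i h]⟩
        · exact ⟨i + 1, ⟨by omega, by omega⟩, by rw [hℓ'eq2 (i + 1) (by omega)]; simp⟩
  -- the new min-index set
  have hSet' : Icc 1 d \ (Icc 1 (s + 1)).image ℓ' = S' := by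
    rw [himage, Finset.sdiff_insert, ← hS, ← hS']
  -- injectivity facts
  have hinjℓ : Set.InjOn ℓ (range (s + 1)) := by
    intro a ha b hb hab
    rw [mem_coe, mem_range] at ha hb
    rcases lt_trichotomy a b with h | h | h
    · exact absurd hab (Nat.ne_of_lt (hmono' a b h (by omega)))
    · exact h
    · exact absurd hab (Nat.ne_of_lt (hmono' b a h (by omega))).symm
  have hinjℓ' : Set.InjOn ℓ' (range (s + 1 + 1)) := by
    intro a ha b hb hab
    rw [mem_coe, mem_range] at ha hb
    rcases lt_trichotomy a b with h | h | h
    · exact absurd hab (Nat.ne_of_lt (hmono'' a b h (by omega)))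
    · exact h
    · exact absurd hab (Nat.ne_of_lt (hmono'' b a h (by omega))).symm
  -- first-factor products
  have hrange : ∀ n : ℕ, range (n + 1) = insert 0 (Icc 1 n) := by
    intro n; ext x; simp; omega
  have himg0 : (range (s + 1)).image ℓ = insert 0 I := by
    rw [hrange s, image_insert, h0, hI]
  have himg0' : (range (s + 1 + 1)).image ℓ' = insert 0 (insert m I) := by
    rw [hrange (s + 1), image_insert, hℓ'eq1 0 (by omega), himage]
  have hA : ∏ x ∈ (range (s + 1 + 1)).image ℓ', e x = ∏ j ∈ range (s + 1 + 1), e (ℓ' j) :=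
    Finset.prod_image (fun a ha b hb hab => hinjℓ' ha hb hab)
  have hB : ∏ x ∈ (range (s + 1)).image ℓ, e x = ∏ j ∈ range (s + 1), e (ℓ j) :=
    Finset.prod_image (fun a ha b hb hab => hinjℓ ha hb hab)
  have hprod1 : ∏ j ∈ range (s + 1 + 1), e (ℓ' j) = e m * ∏ j ∈ range (s + 1), e (ℓ j) := by
    rw [← hA, ← hB, himg0, himg0', Finset.insert_comm, Finset.prod_insert]
    rw [mem_insert]
    push_neg
    exact ⟨by omega, hmI⟩
  -- counting lemmas
  have hcount : ∀ t ∈ S', S.filter (fun u => t < u) = S'.filter (fun u => t < u) := by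
    intro t ht
    have hmt := hmin' t ht
    ext u
    simp only [mem_filter, hS', mem_erase]
    constructor
    · rintro ⟨hu, htu⟩
      exact ⟨⟨by omega, hu⟩, htu⟩
    · rintro ⟨⟨_, hu⟩, htu⟩
      exact ⟨hu, htu⟩
  have hjcount : ∀ t ∈ S',
      ((Icc 1 (s + 1)).filter (fun j => ℓ' j < t)).card
        = ((Icc 1 s).filter (fun j => ℓ j < t)).card + 1 := by
    intro t ht
    have hmt := hmin' t ht
    have e1 : ((Icc 1 (s + 1)).filter (fun j => ℓ' j < t)).card
        = (((Icc 1 (s + 1)).image ℓ').filter (fun x => x < t)).card := by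
      rw [Finset.filter_image]
      rw [Finset.card_image_of_injOn]
      intro a ha b hb hab
      have ha' : a ∈ (range (s + 2) : Finset ℕ) := by
        have := (Finset.mem_filter.mp ha).1
        rw [mem_Icc] at this
        simp [mem_range]; omega
      have hb' : b ∈ (range (s + 2) : Finset ℕ) := by
        have := (Finset.mem_filter.mp hb).1
        rw [mem_Icc] at this
        simp [mem_range]; omega
      exact hinjℓ' ha' hb' hab
    have e2 : ((Icc 1 s).filter (fun j => ℓ j < t)).card
        = (I.filter (fun x => x < t)).card := by
      rw [hI, Finset.filter_image]
      rw [Finset.card_image_of_injOn]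
      intro a ha b hb hab
      have ha' : a ∈ (range (s + 1) : Finset ℕ) := by
        have := (Finset.mem_filter.mp ha).1
        rw [mem_Icc] at this
        simp [mem_range]; omega
      have hb' : b ∈ (range (s + 1) : Finset ℕ) := by
        have := (Finset.mem_filter.mp hb).1
        rw [mem_Icc] at this
        simp [mem_range]; omega
      exact hinjℓ ha' hb' hab
    rw [e1, e2, himage, Finset.filter_insert, if_pos hmt, Finset.card_insert_of_notMem]
    intro hcon
    exact hmI (Finset.filter_subset _ _ hcon)
  -- factor of m is e m
  have hfm : ¬ (S.filter (fun u => m < u)).card < d - k := by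
    have : S.filter (fun u => m < u) = S' := by
      ext u
      simp only [mem_filter, hS', mem_erase]
      constructor
      · rintro ⟨hu, hmu⟩; exact ⟨by omega, hu⟩
      · rintro ⟨hum, hu⟩; exact ⟨hu, hmin u hu hum⟩
    rw [this, hS'card]
    omega
  have hdk : d - k ≤ S'.card := by rw [hS'card]; omega
  refine ⟨ℓ', hℓ'eq1 0 (by omega), hmono'', ?_, ?_, ?_⟩
  · -- ℓ' (s+1) ≤ d
    rcases le_or_gt (s + 1) (j₀ + 1) with h | h
    · rw [hℓ'eq1 _ h]; omega
    · rw [hℓ'eq2 _ h]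
      simpa using hled
  · -- image equality
    rw [hℓj₀]
    exact himage
  -- the main computation
  unfold Umaj
  rw [hSet', ← hI, ← hS]
  rw [hprod1]
  -- abbreviate the old factor
  set f : ℕ → ℝ := fun t =>
    if (S.filter (fun t' => t < t')).card < d - k then
      q ^ ((Icc 1 s).filter (fun j => ℓ j < t)).card
    else e t with hf
  have hsplit : ∏ t ∈ S, f t = e m * ∏ t ∈ S', f t := by
    rw [hS', ← Finset.mul_prod_erase S f hmS]
    congr 1
    simp only [hf]
    rw [if_neg hfm]
  have hnew : ∀ t ∈ S',
      (if ((S'.filter (fun t' => t < t')).card) < d - k then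
        (q : ℝ) ^ ((Icc 1 (s + 1)).filter (fun j => ℓ' j < t)).card
      else e t)
      = (if (S'.filter (fun t' => t < t')).card < d - k then q else 1) * f t := by
    intro t ht
    simp only [hf]
    rw [hcount t ht, hjcount t ht]
    by_cases hcond : (S'.filter (fun t' => t < t')).card < d - k
    · rw [if_pos hcond, if_pos hcond, if_pos hcond, pow_succ]
      ring
    · rw [if_neg hcond, if_neg hcond, if_neg hcond, one_mul]
  have hR : (∏ t ∈ S', if (S'.filter (fun t' => t < t')).card < d - k then
        (q : ℝ) ^ ((Icc 1 (s + 1)).filter (fun j => ℓ' j < t)).card else e t)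
      = q ^ (d - k) * ∏ t ∈ S', f t := by
    rw [Finset.prod_congr rfl hnew, Finset.prod_mul_distrib]
    congr 1
    rw [Finset.prod_ite, Finset.prod_const, Finset.prod_const_one, mul_one,
      rank_filter_card S' (d - k) hdk]
  rw [hR, hsplit]
  ring
end
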